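/- (Theorem 3.2 (i)) Assume G is conserved by X. Let x : ℝ → E be a differentiable curve solving the geometrically dissipated system with x(0) = x₀, and suppose there are sequences (tₙ) and (sₙ) of reals tending to +∞ and points a, b ∈ E such that x(tₙ) → a and x(sₙ) → b. Then G(a) = G(b) ≤ G(x₀). Moreover, if G(a) = G(x₀), then x₀ ∈ Inv. -/

import Mathlib

open scoped RealInnerProductSpace BigOperators
open Filter Topology

/-- `Σ^{(a₁,…,a_r)}_{(b₁,…,b_s)}`: the `r × s` real matrix whose `(i,j)` entry is `⟪b j, a i⟫`. -/
noncomputable def sigmaMat {E : Type*} [NormedAddCommGroup E] [InnerProductSpace ℝ E]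
    {r s : ℕ} (a : Fin r → E) (b : Fin s → E) : Matrix (Fin r) (Fin s) ℝ :=
  Matrix.of fun i j => ⟪b j, a i⟫

/-- The standard control vector `v₀(w₁,…,w_{k+1},u)`: there are `k+1` vectors `w`
(`k+1 ≥ 1` encodes the requirement that the number of `w`-vectors is at least one).
With `0`-indexing, the sign `(-1)^(i+k+1)` below is the paper's `(-1)^{i+k+1}` for
`1`-indexed `i` and `k+1` vectors. -/
noncomputable def stdControl {E : Type*} [NormedAddCommGroup E] [InnerProductSpace ℝ E]
    {k : ℕ} (w : Fin (k + 1) → E) (u : E) : E :=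
  (∑ i : Fin (k + 1),
      ((-1 : ℝ) ^ ((i : ℕ) + k + 1) *
        (sigmaMat w (Fin.snoc (w ∘ i.succAbove) u)).det) • w i) +
    (sigmaMat w w).det • u

/-- The family of gradients `(∇F₁(x),…,∇F_{k+1}(x),∇G(x))`. -/
noncomputable def gradFam {E : Type*} [NormedAddCommGroup E] [InnerProductSpace ℝ E]
    [FiniteDimensional ℝ E] {k : ℕ} (F : Fin (k + 1) → E → ℝ) (G : E → ℝ) (x : E) :
    Fin (k + 1 + 1) → E :=
  Fin.snoc (fun i => gradient (F i) x) (gradient G x)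

/-- The standard control vector field `x ↦ v₀(∇F₁(x),…,∇F_{k+1}(x),∇G(x))`. -/
noncomputable def v0Field {E : Type*} [NormedAddCommGroup E] [InnerProductSpace ℝ E]
    [FiniteDimensional ℝ E] {k : ℕ} (F : Fin (k + 1) → E → ℝ) (G : E → ℝ) (x : E) : E :=
  stdControl (fun i => gradient (F i) x) (gradient G x)

/-- `det Σ^{(∇F₁(x),…,∇F_{k+1}(x),∇G(x))}_{(∇F₁(x),…,∇F_{k+1}(x),∇G(x))}`. -/
noncomputable def gramDetFG {E : Type*} [NormedAddCommGroup E] [InnerProductSpace ℝ E]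
    [FiniteDimensional ℝ E] {k : ℕ} (F : Fin (k + 1) → E → ℝ) (G : E → ℝ) (x : E) : ℝ :=
  (sigmaMat (gradFam F G x) (gradFam F G x)).det

/-- The set `Inv = {x | det Σ^{(∇F(x),∇G(x))}_{(∇F(x),∇G(x))} = 0}`. -/
def invSet {E : Type*} [NormedAddCommGroup E] [InnerProductSpace ℝ E]
    [FiniteDimensional ℝ E] {k : ℕ} (F : Fin (k + 1) → E → ℝ) (G : E → ℝ) : Set E :=
  {x | gramDetFG F G x = 0}

lemma snoc_comp_succAbove {E : Type*} {k : ℕ} (w : Fin (k + 1) → E) (u : E) (i : Fin (k + 1)) :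
    (Fin.snoc w u : Fin (k+2) → E) ∘ (Fin.castSucc i).succAbove
      = Fin.snoc (w ∘ i.succAbove) u := by
  funext r
  refine Fin.lastCases ?_ (fun r' => ?_) r
  · have : (Fin.castSucc i).succAbove (Fin.last k) = Fin.last (k+1) := by
      rw [Fin.succAbove_castSucc_of_le i (Fin.last k) (Fin.le_last i)]
      rfl
    simp [this]
  · simp [Fin.castSucc_succAbove_castSucc]


lemma inner_stdControl {E : Type*} [NormedAddCommGroup E] [InnerProductSpace ℝ E]
    {k : ℕ} (w : Fin (k + 1) → E) (u : E) :
    ⟪u, stdControl w u⟫ = (sigmaMat (Fin.snoc w u) (Fin.snoc w u)).det := by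
  rw [Matrix.det_succ_column _ (Fin.last (k+1))]
  rw [Fin.sum_univ_castSucc]
  rw [stdControl, inner_add_right, inner_sum]
  congr 1
  · refine Finset.sum_congr rfl fun i _ => ?_
    rw [real_inner_smul_right]
    have hsub : (sigmaMat (Fin.snoc w u) (Fin.snoc w u)).submatrix
        (Fin.castSucc i).succAbove (Fin.last (k+1)).succAbove
        = (sigmaMat w (Fin.snoc (w ∘ i.succAbove) u)).transpose := by
      ext r c
      simp only [Matrix.submatrix_apply, Matrix.transpose_apply, sigmaMat, Matrix.of_apply,
        Fin.succAbove_last]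
      have hr := congrFun (snoc_comp_succAbove w u i) r
      simp only [Function.comp_apply] at hr
      rw [hr]
      rw [Fin.snoc_castSucc]
      exact real_inner_comm _ _
    rw [hsub, Matrix.det_transpose]
    have hentry : sigmaMat (Fin.snoc w u) (Fin.snoc w u) (Fin.castSucc i) (Fin.last (k+1))
        = ⟪u, w i⟫ := by
      simp [sigmaMat]
    rw [hentry]
    simp only [Fin.coe_castSucc, Fin.val_last]
    ring
  · rw [real_inner_smul_right]
    have hsub : (sigmaMat (Fin.snoc w u) (Fin.snoc w u)).submatrix
        (Fin.last (k+1)).succAbove (Fin.last (k+1)).succAbove = sigmaMat w w := by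
      ext r c
      simp [sigmaMat, Fin.succAbove_last]
    have hentry : sigmaMat (Fin.snoc w u) (Fin.snoc w u) (Fin.last (k+1)) (Fin.last (k+1))
        = ⟪u, u⟫ := by simp [sigmaMat]
    rw [hsub, hentry]
    have : ((-1:ℝ)) ^ ((Fin.last (k+1) : ℕ) + (Fin.last (k+1) : ℕ)) = 1 := by
      rw [Fin.val_last, ← two_mul, pow_mul, neg_one_sq, one_pow]
    rw [this]
    ring


lemma sigmaMat_self_posSemidef {E : Type*} [NormedAddCommGroup E] [InnerProductSpace ℝ E]
    {n : ℕ} (a : Fin n → E) : (sigmaMat a a).PosSemidef := by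
  rw [Matrix.posSemidef_iff_dotProduct_mulVec]
  constructor
  · ext i j
    simp [Matrix.conjTranspose_apply, sigmaMat, real_inner_comm]
  · intro x
    have key : dotProduct (star x) (Matrix.mulVec (sigmaMat a a) x)
        = ⟪∑ j, x j • a j, ∑ i, x i • a i⟫ := by
      simp only [dotProduct, Matrix.mulVec, sigmaMat, Matrix.of_apply, star_trivial,
        sum_inner, inner_sum, real_inner_smul_left, real_inner_smul_right]
      rw [Finset.sum_comm]
      refine Finset.sum_congr rfl fun i _ => ?_
      rw [Finset.mul_sum]
      refine Finset.sum_congr rfl fun j _ => ?_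
      rw [real_inner_comm]
      ring
    rw [key]
    exact real_inner_self_nonneg


lemma sigmaMat_self_det_nonneg {E : Type*} [NormedAddCommGroup E] [InnerProductSpace ℝ E]
    {n : ℕ} (a : Fin n → E) : 0 ≤ (sigmaMat a a).det := by
  have hP := sigmaMat_self_posSemidef a
  rw [hP.1.det_eq_prod_eigenvalues]
  exact Finset.prod_nonneg fun i _ => by simpa using hP.eigenvalues_nonneg i


lemma inner_grad_v0Field {E : Type*} [NormedAddCommGroup E] [InnerProductSpace ℝ E]
    [FiniteDimensional ℝ E] {k : ℕ} (F : Fin (k + 1) → E → ℝ) (G : E → ℝ) (y : E) :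
    ⟪gradient G y, v0Field F G y⟫ = gramDetFG F G y :=
  inner_stdControl (fun i => gradient (F i) y) (gradient G y)


lemma hasDerivAt_comp_gradient {E : Type*} [NormedAddCommGroup E] [InnerProductSpace ℝ E]
    [FiniteDimensional ℝ E] (G : E → ℝ) (hG : ContDiff ℝ 1 G)
    (x : ℝ → E) (x' : E) (r : ℝ) (hx : HasDerivAt x x' r) :
    HasDerivAt (fun u => G (x u)) ⟪gradient G (x r), x'⟫ r := by
  have hdG : DifferentiableAt ℝ G (x r) := (hG.differentiable one_ne_zero).differentiableAt
  have hf : HasFDerivAt G (InnerProductSpace.toDual ℝ E (gradient G (x r))) (x r) :=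
    hdG.hasGradientAt.hasFDerivAt
  have h := hf.comp_hasDerivAt r hx
  rw [InnerProductSpace.toDual_apply_apply] at h
  exact h


/-- Theorem 3.2 (i): if `a` and `b` are limits of a solution of the
geometrically dissipated system along two sequences of times tending to `+∞`, then
`G a = G b ≤ G x₀`, and `G a = G x₀` implies `x₀ ∈ Inv`. -/
theorem G_eq_on_omega_limits
    {E : Type*} [NormedAddCommGroup E] [InnerProductSpace ℝ E]
    [FiniteDimensional ℝ E] {k : ℕ} (F : Fin (k + 1) → E → ℝ) (G : E → ℝ) (X : E → E)
    (hF : ∀ i, ContDiff ℝ 1 (F i)) (hG : ContDiff ℝ 1 G)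
    (hcons : ∀ y : E, ⟪gradient G y, X y⟫ = 0)
    (x : ℝ → E) (hx : ∀ t : ℝ, HasDerivAt x (X (x t) - v0Field F G (x t)) t)
    (x₀ : E) (hx₀ : x 0 = x₀) (a b : E) (t s : ℕ → ℝ)
    (ht : Tendsto t atTop atTop) (hs : Tendsto s atTop atTop)
    (hta : Tendsto (fun n => x (t n)) atTop (𝓝 a))
    (hsb : Tendsto (fun n => x (s n)) atTop (𝓝 b)) :
    G a = G b ∧ G a ≤ G x₀ ∧ (G a = G x₀ → x₀ ∈ invSet F G) := by
  set g : ℝ → ℝ := fun u => G (x u) with hg_def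
  have hderiv : ∀ r : ℝ, HasDerivAt g (-(gramDetFG F G (x r))) r := by
    intro r
    have h1 := hasDerivAt_comp_gradient G hG x _ r (hx r)
    have h2 : ⟪gradient G (x r), X (x r) - v0Field F G (x r)⟫ = -(gramDetFG F G (x r)) := by
      rw [inner_sub_right, hcons, inner_grad_v0Field]; ring
    rwa [h2] at h1
  have hnonneg : ∀ y : E, 0 ≤ gramDetFG F G y := fun y => sigmaMat_self_det_nonneg _
  have hgdiff : Differentiable ℝ g := fun r => (hderiv r).differentiableAt
  have hganti : Antitone g := by
    refine antitone_of_deriv_nonpos hgdiff fun r => ?_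
    rw [(hderiv r).deriv]
    linarith [hnonneg (x r)]
  have hGa : Tendsto (fun n => g (t n)) atTop (𝓝 (G a)) := (hG.continuous.tendsto a).comp hta
  have hGb : Tendsto (fun n => g (s n)) atTop (𝓝 (G b)) := (hG.continuous.tendsto b).comp hsb
  have h0 : g 0 = G x₀ := by rw [hg_def]; simp [hx₀]
  have hba : G b ≤ G a := by
    refine ge_of_tendsto hGa (Eventually.of_forall fun n => ?_)
    refine le_of_tendsto hGb ?_
    filter_upwards [hs.eventually_ge_atTop (t n)] with m hm
    exact hganti hm
  have hab : G a ≤ G b := by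
    refine ge_of_tendsto hGb (Eventually.of_forall fun n => ?_)
    refine le_of_tendsto hGa ?_
    filter_upwards [ht.eventually_ge_atTop (s n)] with m hm
    exact hganti hm
  have haLe : ∀ r : ℝ, G a ≤ g r := by
    intro r
    refine le_of_tendsto hGa ?_
    filter_upwards [ht.eventually_ge_atTop r] with n hn
    exact hganti hn
  have hax₀ : G a ≤ G x₀ := by rw [← h0]; exact haLe 0
  refine ⟨le_antisymm hab hba, hax₀, fun hEq => ?_⟩
  have hge : ∀ r ∈ Set.Ici (0 : ℝ), g r = g 0 := by
    intro r hr
    refine le_antisymm (hganti hr) ?_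
    rw [h0, ← hEq]
    exact haLe r
  have hu : UniqueDiffWithinAt ℝ (Set.Ici (0 : ℝ)) 0 := uniqueDiffOn_Ici 0 0 Set.self_mem_Ici
  have hconst : HasDerivWithinAt g 0 (Set.Ici (0 : ℝ)) 0 :=
    (hasDerivWithinAt_const (0 : ℝ) (Set.Ici (0 : ℝ)) (g 0)).congr hge (hge 0 Set.self_mem_Ici)
  have hW : HasDerivWithinAt g (-(gramDetFG F G (x 0))) (Set.Ici (0 : ℝ)) 0 :=
    (hderiv 0).hasDerivWithinAt
  have hzero : -(gramDetFG F G (x 0)) = 0 := by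
    rw [← hW.derivWithin hu, hconst.derivWithin hu]
  have : gramDetFG F G x₀ = 0 := by rw [← hx₀]; linarith
  exact this
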